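/- For κ ∈ (−1, 1] and n ≥ 1, the coefficient r_n of z^n in (1/2)(√(1+4κ²z/(1−z)²) − 1) satisfies r_n = κ·∫_0^κ P_{n−1}^{(1,0)}(1 − 2s²) ds, where P_{n−1}^{(1,0)} is the Jacobi polynomial of degree n−1 with parameters (1,0). -/

import Mathlib

open Complex Finset
open scoped NNReal ENNReal


/-- The Jacobi polynomial `P_m^{(1,0)}` evaluated at `1 - 2 x`, via the hypergeometric
representation `P_m^{(1,0)}(1-2x) = (m+1) · ₂F₁(-m, m+2; 2; x)`. -/
noncomputable def jacobiP10 (m : ℕ) (x : ℝ) : ℝ :=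
  (m + 1) * ∑ k ∈ Finset.range (m + 1),
    ((ascPochhammer ℝ k).eval (-(m : ℝ)) * (ascPochhammer ℝ k).eval ((m : ℝ) + 2) /
      ((ascPochhammer ℝ k).eval 2 * (Nat.factorial k : ℝ))) * x ^ k


lemma my_choose_le_two_pow (n k : ℕ) : n.choose k ≤ 2 ^ n := by
  rcases le_or_gt k n with h | h
  · calc n.choose k ≤ ∑ m ∈ range (n+1), n.choose m :=
        Finset.single_le_sum (fun i _ => Nat.zero_le _) (mem_range.2 (by omega))
      _ = 2 ^ n := Nat.sum_range_choose n
  · simp [Nat.choose_eq_zero_of_lt h]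

lemma my_catalan_le_four_pow (n : ℕ) : catalan n ≤ 4 ^ n := by
  calc catalan n ≤ n.centralBinom := by
        rw [catalan_eq_centralBinom_div]; exact Nat.div_le_self _ _
    _ ≤ 2 ^ (2*n) := my_choose_le_two_pow (2*n) n
    _ = 4 ^ n := by rw [pow_mul]; norm_num

lemma my_hockey (r m : ℕ) : ∑ k ∈ range (m+1), (r+k).choose k = (r+m+1).choose m := by
  induction m with
  | zero => simp
  | succ m ih =>
    rw [Finset.sum_range_succ, ih]
    exact (Nat.choose_succ_succ (r+m+1) m).symm

lemma my_negBinom {z : ℂ} (hz : ‖z‖ < 1/2) (r : ℕ) :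
    HasSum (fun m : ℕ => ((r+m).choose m : ℂ) * z ^ m) (((1 - z)^(r+1))⁻¹) := by
  induction r with
  | zero => simpa using hasSum_geometric_of_norm_lt_one (by linarith : ‖z‖ < 1)
  | succ r ih =>
    set f : ℕ → ℂ := fun m => ((r+m).choose m : ℂ) * z ^ m with hf_def
    have hnorm : ∀ (s : ℕ) (m : ℕ), ‖((s+m).choose m : ℂ) * z ^ m‖ ≤ 2^s * (2*‖z‖)^m := by
      intro s m
      rw [norm_mul, norm_pow, Complex.norm_natCast]
      calc ((s+m).choose m : ℝ) * ‖z‖^m ≤ 2^(s+m) * ‖z‖^m := by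
            apply mul_le_mul_of_nonneg_right _ (by positivity)
            exact_mod_cast Nat.cast_le.mpr (my_choose_le_two_pow (s+m) m)
        _ = 2^s * (2*‖z‖)^m := by rw [pow_add, mul_pow]; ring
    have hgeo : Summable (fun m : ℕ => (2*‖z‖)^m) :=
      summable_geometric_of_lt_one (by positivity) (by linarith)
    have hfs : Summable fun m => ‖f m‖ := by
      apply Summable.of_nonneg_of_le (fun m => norm_nonneg _) (hnorm r) (hgeo.mul_left _)
    have hgs : Summable fun m => ‖z ^ m‖ := by
      simpa using summable_geometric_of_lt_one (norm_nonneg z) (by linarith : ‖z‖ < 1)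
    have hg : HasSum (fun m : ℕ => z ^ m) (1-z)⁻¹ :=
      hasSum_geometric_of_norm_lt_one (by linarith : ‖z‖ < 1)
    have hfg : Summable (fun x : ℕ × ℕ => f x.1 * z ^ x.2) :=
      summable_mul_of_summable_norm hfs hgs
    have hsum : Summable fun n => ∑ kl ∈ antidiagonal n, f kl.1 * z ^ kl.2 :=
      summable_sum_mul_antidiagonal_of_summable_mul hfg
    have htsum : (∑' n, ∑ kl ∈ antidiagonal n, f kl.1 * z ^ kl.2)
        = ((1-z)^(r+1))⁻¹ * (1-z)⁻¹ := by
      rw [← Summable.tsum_mul_tsum_eq_tsum_sum_antidiagonal ih.summable hg.summable hfg,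
        ih.tsum_eq, hg.tsum_eq]
    have hkey : ∀ n : ℕ, (∑ kl ∈ antidiagonal n, f kl.1 * z ^ kl.2)
        = ((r+1+n).choose n : ℂ) * z ^ n := by
      intro n
      rw [Finset.Nat.sum_antidiagonal_eq_sum_range_succ_mk]
      have : ∀ k ∈ range (n+1), f k * z ^ (n - k) = ((r+k).choose k : ℂ) * z ^ n := by
        intro k hk
        rw [hf_def]
        rw [mul_assoc, ← pow_add]
        have hk' := mem_range.1 hk
        congr 2
        omega
      rw [Finset.sum_congr rfl this, ← Finset.sum_mul]
      congr 1
      rw [← Nat.cast_sum]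
      rw [my_hockey r n]
      norm_num [add_right_comm]
    have : HasSum (fun n => ∑ kl ∈ antidiagonal n, f kl.1 * z ^ kl.2)
        (((1-z)^(r+1+1))⁻¹) := by
      rw [Summable.hasSum_iff hsum, htsum, ← mul_inv, ← pow_succ]
    simpa [hkey] using this

section CatalanSeries

variable {u : ℂ} (hu : ‖u‖ ≤ 1/8)
include hu

lemma my_cat_summable : Summable fun j : ℕ => ‖(catalan j : ℂ) * u^(j+1)‖ := by
  have h : ∀ j : ℕ, ‖(catalan j : ℂ) * u^(j+1)‖ ≤ ‖u‖ * (1/2)^j := by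
    intro j
    rw [norm_mul, norm_pow, Complex.norm_natCast]
    calc (catalan j : ℝ) * ‖u‖^(j+1) ≤ 4^j * ‖u‖^(j+1) := by
          apply mul_le_mul_of_nonneg_right _ (by positivity)
          exact_mod_cast my_catalan_le_four_pow j
      _ = ‖u‖ * (4*‖u‖)^j := by rw [mul_pow, pow_succ]; ring
      _ ≤ ‖u‖ * (1/2)^j := by
          apply mul_le_mul_of_nonneg_left _ (norm_nonneg u)
          apply pow_le_pow_left₀ (by positivity) (by linarith)
  exact Summable.of_nonneg_of_le (fun _ => norm_nonneg _) h
    ((summable_geometric_of_lt_one (by norm_num) (by norm_num)).mul_left _)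

lemma my_cat_hasSum : HasSum (fun j : ℕ => (catalan j : ℂ) * u^(j+1))
    (∑' j : ℕ, (catalan j : ℂ) * u^(j+1)) :=
  ((my_cat_summable hu).of_norm).hasSum

lemma my_cat_norm_le : ‖∑' j : ℕ, (catalan j : ℂ) * u^(j+1)‖ ≤ 2 * ‖u‖ := by
  have h : ∀ j : ℕ, ‖(catalan j : ℂ) * u^(j+1)‖ ≤ ‖u‖ * (1/2)^j := by
    intro j
    rw [norm_mul, norm_pow, Complex.norm_natCast]
    calc (catalan j : ℝ) * ‖u‖^(j+1) ≤ 4^j * ‖u‖^(j+1) := by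
          apply mul_le_mul_of_nonneg_right _ (by positivity)
          exact_mod_cast my_catalan_le_four_pow j
      _ = ‖u‖ * (4*‖u‖)^j := by rw [mul_pow, pow_succ]; ring
      _ ≤ ‖u‖ * (1/2)^j := by
          apply mul_le_mul_of_nonneg_left _ (norm_nonneg u)
          apply pow_le_pow_left₀ (by positivity) (by linarith)
  calc ‖∑' j : ℕ, (catalan j : ℂ) * u^(j+1)‖
      ≤ ∑' j : ℕ, ‖(catalan j : ℂ) * u^(j+1)‖ := norm_tsum_le_tsum_norm (my_cat_summable hu)
    _ ≤ ∑' j : ℕ, ‖u‖ * (1/2)^j := by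
        apply Summable.tsum_le_tsum h (my_cat_summable hu)
        exact (summable_geometric_of_lt_one (by norm_num) (by norm_num)).mul_left _
    _ = ‖u‖ * (1-1/2)⁻¹ := by
        rw [tsum_mul_left, tsum_geometric_of_lt_one (by norm_num) (by norm_num)]
    _ = 2 * ‖u‖ := by ring

lemma my_cat_sq : (∑' j : ℕ, (catalan j : ℂ) * u^(j+1)) ^ 2
    = (∑' j : ℕ, (catalan j : ℂ) * u^(j+1)) - u := by
  set S := ∑' j : ℕ, (catalan j : ℂ) * u^(j+1) with hS_def
  set f : ℕ → ℂ := fun j => (catalan j : ℂ) * u^(j+1) with hf_def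
  have hfs : Summable fun j => ‖f j‖ := my_cat_summable hu
  have hf : HasSum f S := my_cat_hasSum hu
  have hfg : Summable (fun x : ℕ × ℕ => f x.1 * f x.2) :=
    summable_mul_of_summable_norm hfs hfs
  have h1 : S * S = ∑' n, ∑ kl ∈ antidiagonal n, f kl.1 * f kl.2 := by
    rw [← hf.tsum_eq]
    exact Summable.tsum_mul_tsum_eq_tsum_sum_antidiagonal hf.summable hf.summable hfg
  have h2 : ∀ n : ℕ, (∑ kl ∈ antidiagonal n, f kl.1 * f kl.2)
      = (catalan (n+1) : ℂ) * u^(n+2) := by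
    intro n
    have : ∀ kl ∈ antidiagonal n, f kl.1 * f kl.2
        = ((catalan kl.1 * catalan kl.2 : ℕ) : ℂ) * u^(n+2) := by
      intro kl hkl
      have hkl' := Finset.HasAntidiagonal.mem_antidiagonal.1 hkl
      rw [hf_def]
      push_cast
      rw [show (catalan kl.1 : ℂ) * u^(kl.1+1) * ((catalan kl.2 : ℂ) * u^(kl.2+1))
        = (catalan kl.1 : ℂ) * (catalan kl.2 : ℂ) * u^(kl.1+1+(kl.2+1)) by rw [pow_add]; ring]
      congr 2
      omega
    rw [Finset.sum_congr rfl this, ← Finset.sum_mul, ← Nat.cast_sum, ← catalan_succ']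
  have h3 : HasSum (fun n : ℕ => f (n+1)) (S - u) := by
    apply (hasSum_nat_add_iff 1).2
    have : S - u + ∑ i ∈ range 1, f i = S := by
      simp [hf_def]
    rwa [this]
  have h4 : (∑' n : ℕ, (catalan (n+1) : ℂ) * u^(n+2)) = S - u := by
    have := h3.tsum_eq
    simpa [hf_def] using this
  rw [sq, h1]
  rw [tsum_congr h2, h4]

end CatalanSeries

lemma my_re_cpow_half (w : ℂ) : 0 ≤ (w ^ ((1:ℂ)/2)).re := by
  rcases eq_or_ne w 0 with h | h
  · simp [h, Complex.zero_cpow (by norm_num : ((1:ℂ)/2) ≠ 0)]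
  · rw [Complex.cpow_def_of_ne_zero h, Complex.exp_re]
    apply mul_nonneg (Real.exp_pos _).le
    apply Real.cos_nonneg_of_mem_Icc
    have h1 := Complex.neg_pi_lt_arg w
    have h2 := Complex.arg_le_pi w
    have him : (Complex.log w * ((1:ℂ)/2)).im = w.arg / 2 := by
      simp [Complex.mul_im, Complex.log_im]
      ring
    rw [him]
    have hpi := Real.pi_pos
    constructor <;> [linarith; linarith]

lemma my_cpow_half_sq {w : ℂ} (hw : w ≠ 0) : w ^ ((1:ℂ)/2) * w ^ ((1:ℂ)/2) = w := by
  rw [← Complex.cpow_add _ _ hw]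
  norm_num

lemma my_cpow_half_sub_one {w : ℂ} (hw : w ≠ 0) : ‖w ^ ((1:ℂ)/2) - 1‖ ≤ ‖w - 1‖ := by
  set a := w ^ ((1:ℂ)/2) with ha_def
  have h1 : (1:ℝ) ≤ ‖a + 1‖ := by
    have hre : (1:ℝ) ≤ (a+1).re := by
      have := my_re_cpow_half w
      simp only [Complex.add_re, Complex.one_re, ← ha_def]
      linarith
    calc (1:ℝ) ≤ (a+1).re := hre
      _ ≤ ‖a+1‖ := Complex.re_le_norm _
  calc ‖a - 1‖ ≤ ‖a-1‖ * ‖a+1‖ := le_mul_of_one_le_right (norm_nonneg _) h1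
    _ = ‖(a-1)*(a+1)‖ := (norm_mul _ _).symm
    _ = ‖w - 1‖ := by rw [show (a-1)*(a+1) = a*a - 1 by ring, my_cpow_half_sq hw]

noncomputable def cc (κ : ℝ) : ℕ → ℝ
  | 0 => 0
  | n+1 => ∑ jm ∈ antidiagonal n,
      (-1:ℝ)^jm.1 * (catalan jm.1 : ℝ) * κ^(2*jm.1+2) * ((2*jm.1+1+jm.2).choose jm.2 : ℝ)

/-- the double family -/

noncomputable def FF (κ : ℝ) (z : ℂ) : ℕ × ℕ → ℂ := fun jm =>
  (-1:ℂ)^jm.1 * (catalan jm.1 : ℂ) * (κ:ℂ)^(2*jm.1+2) *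
    ((2*jm.1+1+jm.2).choose jm.2 : ℂ) * z^(jm.1+1+jm.2)

lemma FF_norm_le (κ : ℝ) (hκ1 : ‖(κ:ℂ)‖ ≤ 1) (z : ℂ) (jm : ℕ × ℕ) :
    ‖FF κ z jm‖ ≤ (2*‖z‖*(16*‖z‖)^jm.1) * (2*‖z‖)^jm.2 := by
  obtain ⟨j, m⟩ := jm
  rw [FF]
  simp only [norm_mul, norm_pow, norm_neg, norm_one, one_pow, one_mul, Complex.norm_natCast]
  have h1 : (catalan j : ℝ) ≤ 4^j := by exact_mod_cast my_catalan_le_four_pow j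
  have h2 : ‖(κ:ℂ)‖^(2*j+2) ≤ 1 := pow_le_one₀ (norm_nonneg _) hκ1
  have h3 : ((2*j+1+m).choose m : ℝ) ≤ 2^(2*j+1+m) := by
    exact_mod_cast my_choose_le_two_pow (2*j+1+m) m
  calc (catalan j : ℝ) * ‖(κ:ℂ)‖^(2*j+2) * ((2*j+1+m).choose m : ℝ) * ‖z‖^(j+1+m)
      ≤ (4:ℝ)^j * 1 * 2^(2*j+1+m) * ‖z‖^(j+1+m) := by
        gcongr <;> positivity
    _ = (2*‖z‖*(16*‖z‖)^j) * (2*‖z‖)^m := by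
        have e1 : (2:ℝ)^(2*j+1+m) = 4^j*2*2^m := by
          rw [pow_add, pow_add, pow_mul]; norm_num
        have e2 : ‖z‖^(j+1+m) = ‖z‖*‖z‖^j*‖z‖^m := by rw [pow_add, pow_add]; ring
        have e3 : (16:ℝ)^j = 4^j*4^j := by rw [show (16:ℝ) = 4*4 by norm_num, mul_pow]
        rw [e1, e2, mul_pow, mul_pow, e3]
        ring

lemma FF_summable (κ : ℝ) (hκ1 : ‖(κ:ℂ)‖ ≤ 1) {z : ℂ} (hz : ‖z‖ < 1/64) :
    Summable (FF κ z) := by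
  have hb := Summable.mul_of_nonneg (f := fun j : ℕ => 2*‖z‖*(16*‖z‖)^j)
    (g := fun m : ℕ => (2*‖z‖)^m)
    ((summable_geometric_of_lt_one (by positivity) (by linarith)).mul_left _)
    (summable_geometric_of_lt_one (by positivity) (by linarith))
    (fun j => by positivity) (fun m => by positivity)
  exact Summable.of_norm_bounded hb (FF_norm_le κ hκ1 z)

lemma FF_fiber (κ : ℝ) {z : ℂ} (hz : ‖z‖ < 1/64) (h1z0 : (1:ℂ) - z ≠ 0) (j : ℕ) :
    HasSum (fun m => FF κ z (j, m))
      (-((catalan j : ℂ) * (-((κ:ℂ)^2 * z / (1-z)^2))^(j+1))) := by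
  have h0 := (my_negBinom (by linarith : ‖z‖ < 1/2) (2*j+1)).mul_left
    ((-1:ℂ)^j * (catalan j : ℂ) * (κ:ℂ)^(2*j+2) * z^(j+1))
  have heq : (fun m => ((-1:ℂ)^j * (catalan j : ℂ) * (κ:ℂ)^(2*j+2) * z^(j+1)) *
      (((2*j+1+m).choose m : ℂ) * z ^ m)) = fun m => FF κ z (j, m) := by
    funext m
    rw [FF]
    rw [show z^(j+1+m) = z^(j+1) * z^m by rw [← pow_add]]
    ring
  rw [heq] at h0
  have hval : ((-1:ℂ)^j * (catalan j : ℂ) * (κ:ℂ)^(2*j+2) * z^(j+1)) *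
      (((1-z)^(2*j+1+1))⁻¹) = -((catalan j : ℂ) * (-((κ:ℂ)^2 * z / (1-z)^2))^(j+1)) := by
    have hupow : (-((κ:ℂ)^2 * z / (1-z)^2))^(j+1)
        = (-1:ℂ)^(j+1) * ((κ:ℂ)^(2*j+2) * z^(j+1) * (((1-z)^(2*j+2)))⁻¹) := by
      rw [neg_pow]
      congr 1
      rw [div_pow, mul_pow, ← pow_mul, ← pow_mul, div_eq_mul_inv]
      ring_nf
    rw [hupow, pow_succ]
    ring_nf
  rw [hval] at h0
  exact h0

lemma my_key (κ : ℝ) (hκ2 : κ^2 ≤ 1) {z : ℂ} (hz : ‖z‖ < 1/64) :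
    HasSum (fun n : ℕ => (cc κ n : ℂ) * z^n)
      ((1 / 2) * ((1 + 4 * (κ : ℂ) ^ 2 * z / (1 - z) ^ 2) ^ ((1 : ℂ) / 2) - 1)) := by
  have hκ1 : ‖(κ:ℂ)‖ ≤ 1 := by
    rw [Complex.norm_real, Real.norm_eq_abs]
    nlinarith [abs_nonneg κ, _root_.sq_abs κ]
  have h1z : (63:ℝ)/64 ≤ ‖(1:ℂ) - z‖ := by
    have := norm_sub_norm_le (1:ℂ) z
    rw [norm_one] at this
    linarith
  have h1z0 : (1:ℂ) - z ≠ 0 := by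
    intro h
    rw [h, norm_zero] at h1z
    norm_num at h1z
  set u : ℂ := -((κ:ℂ)^2 * z / (1-z)^2) with hu_def
  have hu : ‖u‖ ≤ 1/60 := by
    have hnum : ‖(κ:ℂ)^2 * z‖ ≤ 1/64 := by
      rw [norm_mul, norm_pow]
      calc ‖(κ:ℂ)‖^2 * ‖z‖ ≤ 1 * (1/64) := by
            apply mul_le_mul (pow_le_one₀ (norm_nonneg _) hκ1) hz.le (norm_nonneg _) one_pos.le
        _ = 1/64 := by norm_num
    rw [hu_def, norm_neg, norm_div, norm_pow]
    rw [div_le_iff₀ (by positivity)]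
    calc ‖(κ:ℂ)^2 * z‖ ≤ 1/64 := by rw [norm_mul, norm_pow]; rw [norm_mul, norm_pow] at hnum; exact hnum
      _ ≤ 1/60 * ((63/64)^2) := by norm_num
      _ ≤ 1/60 * ‖(1:ℂ)-z‖^2 := by
          apply mul_le_mul_of_nonneg_left _ (by norm_num)
          apply pow_le_pow_left₀ (by norm_num) h1z
  have hu8 : ‖u‖ ≤ 1/8 := by linarith
  set S : ℂ := ∑' j : ℕ, (catalan j : ℂ) * u^(j+1) with hS_def
  have hF : HasSum (FF κ z) (∑' jm : ℕ × ℕ, FF κ z jm) := (FF_summable κ hκ1 hz).hasSum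
  set tF : ℂ := ∑' jm : ℕ × ℕ, FF κ z jm with htF_def
  have hfib : ∀ j : ℕ, HasSum (fun m => FF κ z (j, m)) (-((catalan j : ℂ) * u^(j+1))) :=
    fun j => FF_fiber κ hz h1z0 j
  have hsumj : HasSum (fun j : ℕ => -((catalan j : ℂ) * u^(j+1))) tF :=
    hF.prod_fiberwise hfib
  have htF : tF = -S := hsumj.unique (my_cat_hasSum hu8).neg
  -- regroup along antidiagonals
  have hsig : HasSum (fun n : ℕ => ∑ kl ∈ antidiagonal n, FF κ z kl) tF := by
    have h1 : HasSum (FF κ z ∘ (Finset.HasAntidiagonal.sigmaAntidiagonalEquivProd (A := ℕ))) tF :=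
      (Equiv.hasSum_iff _).2 hF
    have h2 := h1.sigma (γ := fun n : ℕ => (antidiagonal n : Finset (ℕ × ℕ)))
      (g := fun n => ∑ kl : (antidiagonal n : Finset (ℕ × ℕ)), FF κ z kl)
      (fun n => hasSum_fintype _)
    have h3 : ∀ n : ℕ, (∑ kl : (antidiagonal n : Finset (ℕ × ℕ)), FF κ z kl)
        = ∑ kl ∈ antidiagonal n, FF κ z kl := fun n => Finset.sum_coe_sort _ _
    rwa [funext h3] at h2
  have hcoef : ∀ n : ℕ, (∑ kl ∈ antidiagonal n, FF κ z kl) = (cc κ (n+1) : ℂ) * z^(n+1) := by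
    intro n
    rw [show ((cc κ (n+1) : ℝ) : ℂ) = ∑ jm ∈ antidiagonal n,
        (-1:ℂ)^jm.1 * (catalan jm.1 : ℂ) * (κ:ℂ)^(2*jm.1+2) * ((2*jm.1+1+jm.2).choose jm.2 : ℂ)
      by rw [cc]; push_cast; rfl]
    rw [Finset.sum_mul]
    apply Finset.sum_congr rfl
    intro kl hkl
    have hkl' := mem_antidiagonal.1 hkl
    rw [FF, show kl.1+1+kl.2 = n+1 by omega]
  have hshift : HasSum (fun n : ℕ => (cc κ n : ℂ) * z^n) tF := by
    have h0 : HasSum (fun n : ℕ => (cc κ (n+1) : ℂ) * z^(n+1)) tF := by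
      have := hsig
      simp only [hcoef] at this
      exact this
    have := (hasSum_nat_add_iff (f := fun n : ℕ => (cc κ n : ℂ) * z^n) 1).1 h0
    simpa [cc] using this
  -- identify the value
  set w : ℂ := 1 + 4 * (κ:ℂ)^2 * z / (1-z)^2 with hw_def
  have hw_eq : w = 1 - 4*u := by rw [hw_def, hu_def]; ring
  have hw1 : ‖w - 1‖ ≤ 4 * ‖u‖ := by
    rw [hw_eq, show (1:ℂ) - 4*u - 1 = -(4*u) by ring, norm_neg, norm_mul]
    simp
  have hw0 : w ≠ 0 := by
    intro h
    rw [h] at hw1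
    simp only [zero_sub, norm_neg, norm_one] at hw1
    linarith
  set a : ℂ := w ^ ((1:ℂ)/2) with ha_def
  have hsq : a * a = w := my_cpow_half_sq hw0
  have hg : (-S)^2 + (-S) = -u := by
    have := my_cat_sq hu8
    rw [← hS_def] at this
    linear_combination this
  have hfq : ((1/2:ℂ)*(a-1))^2 + ((1/2:ℂ)*(a-1)) = -u := by
    have h5 : ((1/2:ℂ)*(a-1))^2 + ((1/2:ℂ)*(a-1)) = (a*a - 1)/4 := by ring
    rw [h5, hsq, hw_eq]
    ring
  have hzero : ((-S) - (1/2:ℂ)*(a-1)) * ((-S) + (1/2:ℂ)*(a-1) + 1) = 0 := by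
    linear_combination hg - hfq
  have hSnorm : ‖S‖ ≤ 2 * ‖u‖ := my_cat_norm_le hu8
  have hfnorm : ‖(1/2:ℂ)*(a-1)‖ ≤ 2*‖u‖ := by
    rw [norm_mul]
    have := my_cpow_half_sub_one hw0
    rw [← ha_def] at this
    calc ‖(1/2:ℂ)‖ * ‖a-1‖ ≤ ‖(1/2:ℂ)‖ * ‖w-1‖ :=
          mul_le_mul_of_nonneg_left this (norm_nonneg _)
      _ ≤ ‖(1/2:ℂ)‖ * (4*‖u‖) := mul_le_mul_of_nonneg_left hw1 (norm_nonneg _)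
      _ = 2*‖u‖ := by simp [norm_div]; ring
  have hne : (-S) + (1/2:ℂ)*(a-1) + 1 ≠ 0 := by
    intro h
    have h1 : (1:ℂ) = S - (1/2:ℂ)*(a-1) := by linear_combination h
    have h2 : ‖(1:ℂ)‖ = ‖S - (1/2:ℂ)*(a-1)‖ := congrArg norm h1
    rw [norm_one] at h2
    have h4 := norm_sub_le S ((1/2:ℂ)*(a-1))
    linarith [h2 ▸ h4]
  have hval : tF = (1/2:ℂ) * (a - 1) := by
    rcases mul_eq_zero.1 hzero with h | h
    · rw [htF]
      linear_combination h
    · exact absurd h hne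
  rwa [hval] at hshift

lemma cc_abs_le (κ : ℝ) (hκ2 : κ^2 ≤ 1) (n : ℕ) : |cc κ n| ≤ ((n+1 : ℕ) : ℝ) * 2 * 16^n := by
  have hκ1 : |κ| ≤ 1 := by nlinarith [abs_nonneg κ, _root_.sq_abs κ]
  match n with
  | 0 => simp [cc]
  | n+1 =>
    rw [cc]
    calc |∑ jm ∈ antidiagonal n,
        (-1:ℝ)^jm.1 * (catalan jm.1 : ℝ) * κ^(2*jm.1+2) * ((2*jm.1+1+jm.2).choose jm.2 : ℝ)|
        ≤ ∑ jm ∈ antidiagonal n,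
          |(-1:ℝ)^jm.1 * (catalan jm.1 : ℝ) * κ^(2*jm.1+2) * ((2*jm.1+1+jm.2).choose jm.2 : ℝ)| :=
        Finset.abs_sum_le_sum_abs _ _
      _ ≤ ∑ _jm ∈ antidiagonal n, 2 * 16^n := by
        apply Finset.sum_le_sum
        rintro ⟨j, m⟩ hjm
        have hjm' := mem_antidiagonal.1 hjm
        simp only [_root_.abs_mul, _root_.abs_pow, abs_neg, abs_one, one_pow, one_mul,
          Nat.abs_cast]
        calc (catalan j : ℝ) * |κ|^(2*j+2) * ((2*j+1+m).choose m : ℝ)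
            ≤ 4^j * 1 * 2^(2*j+1+m) := by
              gcongr <;> first
                | positivity
                | (exact_mod_cast my_catalan_le_four_pow j)
                | (exact pow_le_one₀ (abs_nonneg κ) hκ1)
                | (exact_mod_cast my_choose_le_two_pow (2*j+1+m) m)
          _ ≤ 2 * 16^n := by
              have e1 : (4:ℝ)^j * 1 * 2^(2*j+1+m) = 2 * (16^j * 2^m) := by
                rw [show 2*j+1+m = 2*j+m+1 by omega, pow_succ, pow_add, pow_mul,
                  show ((2:ℝ)^2) = 4 by norm_num, show (16:ℝ) = 4*4 by norm_num, mul_pow]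
                ring
              rw [e1]
              have e2 : (16:ℝ)^j * 2^m ≤ 16^j * 16^m := by gcongr <;> norm_num
              calc 2 * ((16:ℝ)^j * 2^m) ≤ 2 * (16^j * 16^m) := by linarith
                _ = 2 * 16^n := by rw [← pow_add, hjm']
      _ = ((n+1 : ℕ) : ℝ) * (2 * 16^n) := by
          rw [Finset.sum_const, Finset.Nat.card_antidiagonal]
          push_cast; ring
      _ ≤ ((n+1+1 : ℕ) : ℝ) * 2 * 16^(n+1) := by
          push_cast
          rw [pow_succ]
          nlinarith [pow_pos (show (0:ℝ) < 16 by norm_num) n]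

noncomputable def qSeries (κ : ℝ) : FormalMultilinearSeries ℂ ℂ ℂ :=
  FormalMultilinearSeries.ofScalars ℂ (fun n => (cc κ n : ℂ))

lemma qSeries_hasFPS (κ : ℝ) (hκ2 : κ^2 ≤ 1) :
    HasFPowerSeriesAt
      (fun z : ℂ => (1 / 2) * ((1 + 4 * (κ : ℂ) ^ 2 * z / (1 - z) ^ 2) ^ ((1 : ℂ) / 2) - 1))
      (qSeries κ) 0 := by
  refine HasFPowerSeriesOnBall.hasFPowerSeriesAt (r := ((1/64 : ℝ≥0) : ℝ≥0∞)) ⟨?_, by norm_num, ?_⟩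
  · apply FormalMultilinearSeries.le_radius_of_bound _ 4
    intro n
    have h1 : ‖qSeries κ n‖ = |cc κ n| := by
      rw [qSeries, FormalMultilinearSeries.ofScalars_norm, Complex.norm_real, Real.norm_eq_abs]
    rw [h1]
    have h2 : ((1/64 : ℝ≥0) : ℝ) = 1/64 := by norm_num
    rw [h2]
    calc |cc κ n| * (1/64)^n ≤ (((n+1 : ℕ) : ℝ) * 2 * 16^n) * (1/64)^n := by
          gcongr
          exact cc_abs_le κ hκ2 n
      _ = 2 * (((n+1 : ℕ) : ℝ) * (16 * (1/64:ℝ))^n) := by rw [mul_pow]; ring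
      _ = 2 * (((n+1 : ℕ) : ℝ) * (1/4:ℝ)^n) := by norm_num
      _ ≤ 2 * ((2:ℝ)^n * (1/4)^n) := by
          gcongr
          exact_mod_cast (Nat.lt_two_pow_self (n := n))
      _ = 2 * (1/2:ℝ)^n := by rw [← mul_pow]; norm_num
      _ ≤ 4 := by
          have : ((1:ℝ)/2)^n ≤ 1 := pow_le_one₀ (by norm_num) (by norm_num)
          linarith
  · intro y hy
    rw [mem_emetric_ball_zero_iff] at hy
    have hy' : ‖y‖ < 1/64 := by
      have : (‖y‖₊ : ℝ) < ((1/64 : ℝ≥0) : ℝ) := by exact_mod_cast hy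
      simpa using this
    have := my_key κ hκ2 hy'
    simp only [zero_add]
    convert this using 1
    · rfl
    funext n
    rw [qSeries, FormalMultilinearSeries.ofScalars_apply_eq]
    rw [smul_eq_mul]

lemma my_nat_id (m k : ℕ) (hk : k ≤ m) :
    (m+1) * m.descFactorial k * (m+2).ascFactorial k
      = catalan k * ((m+k+1).choose (m-k)) * ((k+1).factorial * k.factorial * (2*k+1)) := by
  apply Nat.eq_of_mul_eq_mul_right (Nat.factorial_pos (m-k))
  have h1 : (m-k).factorial * m.descFactorial k = m.factorial :=
    Nat.factorial_mul_descFactorial hk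
  have h2 : (m+1).factorial * (m+2).ascFactorial k = (m+1+k).factorial :=
    Nat.factorial_mul_ascFactorial (m+1) k
  have h3 : (k+1) * catalan k = k.centralBinom := succ_mul_catalan_eq_centralBinom k
  have h4 : (2*k).choose k * (k.factorial * k.factorial) = (2*k).factorial := by
    have := Nat.choose_mul_factorial_mul_factorial (show k ≤ 2*k by omega)
    rwa [show 2*k-k = k by omega, mul_assoc] at this
  have h5 : (m+k+1).choose (m-k) * ((m-k).factorial * (2*k+1).factorial) = (m+k+1).factorial := by
    have := Nat.choose_mul_factorial_mul_factorial (show m-k ≤ m+k+1 by omega)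
    rwa [show m+k+1-(m-k) = 2*k+1 by omega, mul_assoc] at this
  have hcb : k.centralBinom = (2*k).choose k := Nat.centralBinom_eq_two_mul_choose k
  calc (m+1) * m.descFactorial k * (m+2).ascFactorial k * (m-k).factorial
      = ((m-k).factorial * m.descFactorial k) * ((m+1) * (m+2).ascFactorial k) := by ring
    _ = m.factorial * ((m+1) * (m+2).ascFactorial k) := by rw [h1]
    _ = ((m+1).factorial) * (m+2).ascFactorial k := by rw [Nat.factorial_succ]; ring
    _ = (m+1+k).factorial := h2
    _ = (m+k+1).factorial := by rw [show m+1+k = m+k+1 by omega]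
    _ = (m+k+1).choose (m-k) * ((m-k).factorial * (2*k+1).factorial) := h5.symm
    _ = (m+k+1).choose (m-k) * ((m-k).factorial * ((2*k+1) * (2*k).factorial)) := by
        rw [Nat.factorial_succ]
    _ = (m+k+1).choose (m-k) * ((m-k).factorial * ((2*k+1) *
          ((2*k).choose k * (k.factorial * k.factorial)))) := by rw [h4]
    _ = (m+k+1).choose (m-k) * ((m-k).factorial * ((2*k+1) *
          (((k+1) * catalan k) * (k.factorial * k.factorial)))) := by rw [h3, hcb]
    _ = catalan k * ((m+k+1).choose (m-k)) * ((k+1).factorial * k.factorial * (2*k+1))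
          * (m-k).factorial := by
        rw [Nat.factorial_succ k]
        ring

lemma my_term (m k : ℕ) (hk : k ≤ m) :
    ((m:ℝ)+1) * ((ascPochhammer ℝ k).eval (-(m:ℝ)) * (ascPochhammer ℝ k).eval ((m:ℝ)+2) /
      ((ascPochhammer ℝ k).eval 2 * (Nat.factorial k : ℝ))) / (2*(k:ℝ)+1)
    = (-1:ℝ)^k * (catalan k : ℝ) * (((m+k+1).choose (m-k) : ℕ) : ℝ) := by
  have e1 : (ascPochhammer ℝ k).eval (-(m:ℝ)) = (-1:ℝ)^k * (m.descFactorial k : ℝ) := by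
    rw [ascPochhammer_eval_neg_eq_descPochhammer, descPochhammer_eval_eq_descFactorial]
  have e2 : (ascPochhammer ℝ k).eval ((m:ℝ)+2) = (((m+2).ascFactorial k : ℕ) : ℝ) := by
    rw [show ((m:ℝ)+2) = (((m+2 : ℕ) : ℕ) : ℝ) by push_cast; ring]
    rw [← ascPochhammer_eval_cast, ascPochhammer_nat_eq_ascFactorial]
  have e3 : (ascPochhammer ℝ k).eval 2 = (((k+1).factorial : ℕ) : ℝ) := by
    rw [show (2:ℝ) = ((2:ℕ):ℝ) by norm_num, ← ascPochhammer_eval_cast,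
      ascPochhammer_nat_eq_ascFactorial]
    have h : (2).ascFactorial k = (k+1).factorial := by
      have := Nat.factorial_mul_ascFactorial 1 k
      simpa [Nat.factorial_one, add_comm] using this
    rw [h]
  rw [e1, e2, e3]
  have keyR : ((m:ℝ)+1) * (m.descFactorial k : ℝ) * (((m+2).ascFactorial k : ℕ) : ℝ)
      = (catalan k : ℝ) * (((m+k+1).choose (m-k) : ℕ) : ℝ) *
        ((((k+1).factorial : ℕ) : ℝ) * ((k.factorial : ℕ) : ℝ) * (2*(k:ℝ)+1)) := by
    have := my_nat_id m k hk
    have := congrArg (fun x : ℕ => (x : ℝ)) this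
    push_cast at this ⊢
    linarith [this]
  have hd1 : (((k+1).factorial : ℕ) : ℝ) ≠ 0 := by positivity
  have hd2 : ((k.factorial : ℕ) : ℝ) ≠ 0 := by positivity
  have hd3 : (2*(k:ℝ)+1) ≠ 0 := by positivity
  field_simp
  linear_combination keyR

lemma my_cc_eq (κ : ℝ) (m : ℕ) :
    κ * ∫ s in (0:ℝ)..κ, jacobiP10 m (s^2) = cc κ (m+1) := by
  set d : ℕ → ℝ := fun k => (ascPochhammer ℝ k).eval (-(m:ℝ)) *
      (ascPochhammer ℝ k).eval ((m:ℝ)+2) /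
      ((ascPochhammer ℝ k).eval 2 * (Nat.factorial k : ℝ)) with hd_def
  have h1 : ∀ s : ℝ, jacobiP10 m (s^2) = ((m:ℝ)+1) * ∑ k ∈ range (m+1), d k * s^(2*k) := by
    intro s
    rw [jacobiP10]
    congr 1
    apply Finset.sum_congr rfl
    intro k _
    rw [pow_mul]
  have h2 : (∫ s in (0:ℝ)..κ, jacobiP10 m (s^2))
      = ((m:ℝ)+1) * ∑ k ∈ range (m+1), d k * (κ^(2*k+1) / (2*(k:ℝ)+1)) := by
    have hcont : ∀ k ∈ range (m+1), IntervalIntegrable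
        (fun s : ℝ => d k * s^(2*k)) MeasureTheory.volume 0 κ := by
      intro k _
      exact (Continuous.mul continuous_const (continuous_pow _)).intervalIntegrable _ _
    rw [show (fun s : ℝ => jacobiP10 m (s^2))
        = fun s : ℝ => ((m:ℝ)+1) * ∑ k ∈ range (m+1), d k * s^(2*k) from funext h1]
    rw [intervalIntegral.integral_const_mul, intervalIntegral.integral_finset_sum hcont]
    congr 1
    apply Finset.sum_congr rfl
    intro k _
    rw [intervalIntegral.integral_const_mul, integral_pow]
    congr 1
    rw [zero_pow (by omega : 2*k+1 ≠ 0)]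
    push_cast
    ring
  rw [h2, cc, Finset.Nat.sum_antidiagonal_eq_sum_range_succ_mk]
  rw [Finset.mul_sum, Finset.mul_sum]
  apply Finset.sum_congr rfl
  intro k hk
  have hk' : k ≤ m := by have := mem_range.1 hk; omega
  have := my_term m k hk'
  rw [show 2*k+1+(m-k) = m+k+1 by omega]
  calc κ * (((m:ℝ)+1) * (d k * (κ^(2*k+1) / (2*(k:ℝ)+1))))
      = (((m:ℝ)+1) * d k / (2*(k:ℝ)+1)) * κ^(2*k+2) := by
        rw [pow_succ]
        ring
    _ = ((-1:ℝ)^k * (catalan k : ℝ) * (((m+k+1).choose (m-k) : ℕ) : ℝ)) * κ^(2*k+2) := by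
        rw [hd_def]
        rw [this]
    _ = (-1:ℝ)^k * (catalan k : ℝ) * κ^(2*k+2) * (((m+k+1).choose (m-k) : ℕ) : ℝ) := by ring

theorem stmt8 (κ : ℝ) (hκ : κ ∈ Set.Ioc (-1 : ℝ) 1)
    (p : FormalMultilinearSeries ℂ ℂ ℂ)
    (hp : HasFPowerSeriesAt
      (fun z : ℂ => (1 / 2) * ((1 + 4 * (κ : ℂ) ^ 2 * z / (1 - z) ^ 2) ^ ((1 : ℂ) / 2) - 1))
      p 0)
    (n : ℕ) (hn : 1 ≤ n) :
    p.coeff n = ((κ * ∫ s in (0 : ℝ)..κ, jacobiP10 (n - 1) (s ^ 2) : ℝ) : ℂ) := by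
  obtain ⟨hκl, hκr⟩ := hκ
  have hκsq : κ^2 ≤ 1 := by nlinarith
  have hq := qSeries_hasFPS κ hκsq
  have hpq : p = qSeries κ := hp.eq_formalMultilinearSeries hq
  have hcoeff : (qSeries κ).coeff n = ((cc κ n : ℝ) : ℂ) := by
    have h := FormalMultilinearSeries.ofScalars_apply_eq
      (E := ℂ) (c := fun j => ((cc κ j : ℝ) : ℂ)) (1:ℂ) n
    simp only [one_pow, smul_eq_mul, mul_one] at h
    exact h
  rw [hpq, hcoeff]
  obtain ⟨m, rfl⟩ : ∃ m, n = m+1 := ⟨n-1, by omega⟩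
  rw [show m+1-1 = m from rfl]
  exact congrArg _ (my_cc_eq κ m).symm
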